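/- Let 0 < λN < λN1 be real numbers, let ε > 0 satisfy ε·(3·λN1 + λN) ≤ 1, set θ_ε := (1 − √(1 − 2ε(λN + λN1)))/(2ε), and let λ ∈ ℝ satisfy 0 < λ ≤ λN (so that 4ελ < 1). Let y : ℝ → ℝ be twice differentiable with ε·y″(t) + y′(t) + λ·y(t) = 0 for all t ≤ 0. Then ∫_{−∞}^0 e^{2θ_ε t}·y(t)² dt < ∞ if and only if there exists p ∈ ℝ such that y(t) = p·e^{μ⁺t} for all t ≤ 0, where μ⁺ := (−1 + √(1−4ελ))/(2ε); in that case necessarily p = y(0). -/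

import Mathlib

open MeasureTheory

set_option maxHeartbeats 1000000

private lemma exp_int_aux {c : ℝ} (hc : 0 < c) :
    IntegrableOn (fun t : ℝ => Real.exp (c * t)) (Set.Iic (0:ℝ)) := by
  rw [integrableOn_Iic_iff_integrableOn_Iio,
    ← (Measure.measurePreserving_neg (volume : Measure ℝ)).integrableOn_comp_preimage
      (Homeomorph.neg ℝ).measurableEmbedding]
  simpa [Function.comp_def, Set.neg_preimage, Set.neg_Iio, neg_zero, mul_neg, ← neg_mul]
    using exp_neg_integrableOn_Ioi 0 hc

private lemma const_of_aux (g : ℝ → ℝ) (hg : ∀ x ≤ (0:ℝ), HasDerivAt g 0 x) :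
    ∀ t ≤ (0:ℝ), g t = g 0 := by
  intro t ht
  have h := constant_of_has_deriv_right_zero (f := g) (a := t) (b := 0)
    (fun x hx => (hg x hx.2).continuousAt.continuousWithinAt)
    (fun x hx => (hg x hx.2.le).hasDerivWithinAt)
  exact (h 0 ⟨ht, le_refl 0⟩).symm

private lemma mode_aux (eps lam : ℝ) (heps : 0 < eps) (y : ℝ → ℝ)
    (hy : Differentiable ℝ y) (hy' : Differentiable ℝ (deriv y))
    (hode : ∀ t : ℝ, t ≤ 0 → eps * deriv (deriv y) t + deriv y t + lam * y t = 0)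
    {μ ν : ℝ} (hsum : eps * (μ + ν) = -1) (hprod : eps * (μ * ν) = lam) :
    ∀ t ≤ (0:ℝ), deriv y t - ν * y t = (deriv y 0 - ν * y 0) * Real.exp (μ * t) := by
  set g : ℝ → ℝ := fun t => Real.exp (-μ * t) * (deriv y t - ν * y t) with hg
  have key : ∀ x ≤ (0:ℝ), HasDerivAt g 0 x := by
    intro x hx
    have h1 : HasDerivAt (fun t : ℝ => Real.exp (-μ * t)) (-μ * Real.exp (-μ * x)) x := by
      simpa [Function.comp_def, neg_mul, mul_comm] using
        (Real.hasDerivAt_exp (-μ * x)).comp x ((hasDerivAt_id x).const_mul (-μ))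
    have h2 : HasDerivAt (fun t => deriv y t - ν * y t)
        (deriv (deriv y) x - ν * deriv y x) x :=
      ((hy' x).hasDerivAt).sub (((hy x).hasDerivAt).const_mul ν)
    have h3 := h1.mul h2
    refine h3.congr_deriv ?_
    have h0 := hode x hx
    have key2 : eps * (-μ * Real.exp (-μ * x) * (deriv y x - ν * y x)
        + Real.exp (-μ * x) * (deriv (deriv y) x - ν * deriv y x)) = 0 := by
      linear_combination Real.exp (-μ * x) * h0
        - (Real.exp (-μ * x) * deriv y x) * hsum + (Real.exp (-μ * x) * y x) * hprod
    exact ((mul_eq_zero.mp key2).resolve_left heps.ne')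
  intro t ht
  have h := const_of_aux g key t ht
  simp only [hg, mul_zero, neg_zero, Real.exp_zero, one_mul] at h
  rw [neg_mul, Real.exp_neg] at h
  have hp := (Real.exp_pos (μ * t)).ne'
  field_simp at h
  linear_combination h

theorem stmt_14 (lamN lamN1 eps : ℝ) (hlamN : 0 < lamN) (hlt : lamN < lamN1)
    (heps : 0 < eps) (hgap : eps * (3 * lamN1 + lamN) ≤ 1)
    (theta : ℝ) (htheta : theta = (1 - Real.sqrt (1 - 2 * eps * (lamN + lamN1))) / (2 * eps))
    (lam : ℝ) (hlam0 : 0 < lam) (hlam : lam ≤ lamN)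
    (y : ℝ → ℝ) (hy : Differentiable ℝ y) (hy' : Differentiable ℝ (deriv y))
    (hode : ∀ t : ℝ, t ≤ 0 → eps * deriv (deriv y) t + deriv y t + lam * y t = 0) :
    (IntegrableOn (fun t => Real.exp (2 * theta * t) * (y t) ^ 2) (Set.Iic 0) ↔
      ∃ p : ℝ, ∀ t : ℝ, t ≤ 0 →
        y t = p * Real.exp (((-1 + Real.sqrt (1 - 4 * eps * lam)) / (2 * eps)) * t))
    ∧ ∀ p : ℝ, (∀ t : ℝ, t ≤ 0 →
        y t = p * Real.exp (((-1 + Real.sqrt (1 - 4 * eps * lam)) / (2 * eps)) * t)) →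
        p = y 0 := by
  have h4 : 4 * eps * lam < 1 := by nlinarith
  have hS : 2 * eps * (lamN + lamN1) < 1 := by nlinarith
  set D := Real.sqrt (1 - 4 * eps * lam) with hD
  have hD0 : 0 < D := Real.sqrt_pos.mpr (by linarith)
  have hD2 : D ^ 2 = 1 - 4 * eps * lam := Real.sq_sqrt (by linarith)
  set E := Real.sqrt (1 - 2 * eps * (lamN + lamN1)) with hE
  have hE0 : 0 ≤ E := Real.sqrt_nonneg _
  have hE2 : E ^ 2 = 1 - 2 * eps * (lamN + lamN1) := Real.sq_sqrt (by linarith)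
  set μp := (-1 + D) / (2 * eps) with hμp
  set μm := (-1 - D) / (2 * eps) with hμm
  have hsum_p : eps * (μp + μm) = -1 := by rw [hμp, hμm]; field_simp; ring
  have hprod_p : eps * (μp * μm) = lam := by
    rw [hμp, hμm]; field_simp; nlinarith [hD2]
  have hsum_m : eps * (μm + μp) = -1 := by rw [add_comm]; exact hsum_p
  have hprod_m : eps * (μm * μp) = lam := by rw [mul_comm μm μp]; exact hprod_p
  have hDE : E < D := by nlinarith
  have hθpEq : theta + μp = (D - E) / (2 * eps) := by rw [htheta, hμp]; ring
  have hθp : 0 < theta + μp := by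
    rw [hθpEq]; exact div_pos (by linarith) (by linarith)
  have hθm : theta + μm < 0 := by
    rw [htheta, hμm]
    have : (1 - E) / (2 * eps) + (-1 - D) / (2 * eps) = (-E - D) / (2 * eps) := by ring
    rw [this]
    exact div_neg_of_neg_of_pos (by linarith) (by linarith)
  have e1 := mode_aux eps lam heps y hy hy' hode hsum_p hprod_p
  have e2 := mode_aux eps lam heps y hy hy' hode hsum_m hprod_m
  have hμdpos : 0 < μp - μm := by
    rw [hμp, hμm]
    have : (-1 + D) / (2 * eps) - (-1 - D) / (2 * eps) = D / eps := by field_simp; ring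
    rw [this]; positivity
  have hμne : μp - μm ≠ 0 := hμdpos.ne'
  set A := (deriv y 0 - μm * y 0) / (μp - μm) with hA
  set B := -(deriv y 0 - μp * y 0) / (μp - μm) with hB
  have hrep : ∀ t ≤ (0:ℝ), y t = A * Real.exp (μp * t) + B * Real.exp (μm * t) := by
    intro t ht
    have h1 := e1 t ht
    have h2 := e2 t ht
    have hsub : (μp - μm) * y t = (deriv y 0 - μm * y 0) * Real.exp (μp * t)
        - (deriv y 0 - μp * y 0) * Real.exp (μm * t) := by linear_combination h1 - h2
    rw [hA, hB]
    field_simp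
    linear_combination hsub
  constructor
  · constructor
    · -- forward
      intro hint
      have hB0 : B = 0 := by
        by_contra hBne
        have habs : 0 < |B| := abs_pos.mpr hBne
        set T : ℝ := min 0 (Real.log (|B| / (2 * (|A| + 1))) / (theta + μp)) with hT
        have hT0 : T ≤ 0 := min_le_left _ _
        have hbound : ∀ t ≤ T, |A| * Real.exp ((theta + μp) * t) ≤ |B| / 2 := by
          intro t ht
          have hXpos : 0 < |B| / (2 * (|A| + 1)) := by positivity
          have h1 : Real.exp ((theta + μp) * t) ≤ |B| / (2 * (|A| + 1)) := by
            have h2 : t ≤ Real.log (|B| / (2 * (|A| + 1))) / (theta + μp) :=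
              le_trans ht (min_le_right _ _)
            have h3 : (theta + μp) * t ≤ Real.log (|B| / (2 * (|A| + 1))) := by
              have := mul_le_mul_of_nonneg_left h2 hθp.le
              calc (theta + μp) * t ≤ (theta + μp) *
                  (Real.log (|B| / (2 * (|A| + 1))) / (theta + μp)) := this
                _ = Real.log (|B| / (2 * (|A| + 1))) := by field_simp
            calc Real.exp ((theta + μp) * t)
                ≤ Real.exp (Real.log (|B| / (2 * (|A| + 1)))) := Real.exp_le_exp.mpr h3
              _ = |B| / (2 * (|A| + 1)) := Real.exp_log hXpos
          have hA1 : (0:ℝ) < |A| + 1 := by positivity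
          calc |A| * Real.exp ((theta + μp) * t)
              ≤ (|A| + 1) * (|B| / (2 * (|A| + 1))) :=
                mul_le_mul (by linarith) h1 (Real.exp_pos _).le hA1.le
            _ = |B| / 2 := by field_simp
        have hlow : ∀ t ≤ T, B ^ 2 / 4 ≤ Real.exp (2 * theta * t) * (y t) ^ 2 := by
          intro t ht
          have ht0 : t ≤ 0 := le_trans ht hT0
          have hyt := hrep t ht0
          have hee1 : Real.exp (theta * t) * Real.exp (μp * t)
              = Real.exp ((theta + μp) * t) := by rw [← Real.exp_add]; congr 1; ring
          have hee2 : Real.exp (theta * t) * Real.exp (μm * t)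
              = Real.exp ((theta + μm) * t) := by rw [← Real.exp_add]; congr 1; ring
          have hsplit : Real.exp (theta * t) * y t
              = A * Real.exp ((theta + μp) * t) + B * Real.exp ((theta + μm) * t) := by
            rw [hyt]; linear_combination A * hee1 + B * hee2
          have key : |B| / 2 ≤ |Real.exp (theta * t) * y t| := by
            rw [hsplit]
            have hc2t : (0:ℝ) ≤ (theta + μm) * t := by nlinarith
            have hBe : |B| ≤ |B * Real.exp ((theta + μm) * t)| := by
              rw [abs_mul, abs_of_pos (Real.exp_pos _)]
              nlinarith [Real.one_le_exp hc2t, abs_nonneg B]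
            have hAe : |A * Real.exp ((theta + μp) * t)| ≤ |B| / 2 := by
              rw [abs_mul, abs_of_pos (Real.exp_pos _)]
              exact hbound t ht
            have h := abs_sub_abs_le_abs_sub (B * Real.exp ((theta + μm) * t))
              (-(A * Real.exp ((theta + μp) * t)))
            rw [abs_neg, sub_neg_eq_add] at h
            calc |B| / 2 = |B| - |B| / 2 := by ring
              _ ≤ |B * Real.exp ((theta + μm) * t)| - |A * Real.exp ((theta + μp) * t)| := by
                  linarith
              _ ≤ |B * Real.exp ((theta + μm) * t) + A * Real.exp ((theta + μp) * t)| := h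
              _ = |A * Real.exp ((theta + μp) * t) + B * Real.exp ((theta + μm) * t)| := by
                  rw [add_comm]
          have h2 : (|B| / 2) ^ 2 ≤ (Real.exp (theta * t) * y t) ^ 2 := by
            rw [← sq_abs (Real.exp (theta * t) * y t)]
            exact pow_le_pow_left₀ (by positivity) key 2
          have h3 : (Real.exp (theta * t)) ^ 2 = Real.exp (2 * theta * t) := by
            rw [pow_two, ← Real.exp_add]; congr 1; ring
          have hq : B ^ 2 / 4 = (|B| / 2) ^ 2 := by
            rw [show (|B| / 2) ^ 2 = |B| ^ 2 / 4 by ring, sq_abs]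
          calc B ^ 2 / 4 = (|B| / 2) ^ 2 := hq
            _ ≤ (Real.exp (theta * t) * y t) ^ 2 := h2
            _ = Real.exp (2 * theta * t) * (y t) ^ 2 := by rw [mul_pow, h3]
        have hmono : IntegrableOn (fun t => Real.exp (2 * theta * t) * (y t) ^ 2)
            (Set.Iic T) := hint.mono_set (Set.Iic_subset_Iic.mpr hT0)
        have hconstInt : IntegrableOn (fun _ : ℝ => B ^ 2 / 4) (Set.Iic T) := by
          apply Integrable.mono' hmono aestronglyMeasurable_const
          rw [ae_restrict_iff' measurableSet_Iic]
          filter_upwards with t ht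
          rw [Real.norm_eq_abs, abs_of_nonneg (by positivity)]
          exact hlow t ht
        rw [integrableOn_const_iff] at hconstInt
        rcases hconstInt with h | h
        · rw [enorm_eq_zero] at h
          have : B ^ 2 = 0 := by linarith
          exact hBne (pow_eq_zero_iff two_ne_zero |>.mp this)
        · rw [Real.volume_Iic] at h
          exact absurd h (by simp)
      refine ⟨A, fun t ht => ?_⟩
      rw [hrep t ht, hB0]
      ring
    · -- reverse
      rintro ⟨p, hp⟩
      have hbase : IntegrableOn (fun t : ℝ => p ^ 2 * Real.exp ((2 * (theta + μp)) * t))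
          (Set.Iic (0:ℝ)) :=
        (exp_int_aux (by linarith : (0:ℝ) < 2 * (theta + μp))).const_mul (p ^ 2)
      apply hbase.congr_fun _ measurableSet_Iic
      intro t ht
      simp only [hp t ht]
      have hee : Real.exp (2 * theta * t) * (Real.exp (μp * t)) ^ 2
          = Real.exp ((2 * (theta + μp)) * t) := by
        rw [pow_two, ← Real.exp_add, ← Real.exp_add]; congr 1; ring
      linear_combination (-(p ^ 2)) * hee
  · intro p hp
    have := hp 0 le_rfl
    simpa using this.symm
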